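/- arXiv:1201.1834 — 9 statements merged into one kernel-verified Lean document; each statement's English description precedes it below -/
import Mathlib

section
/- Every perfect lattice is similar to an integral lattice. -/
open Matrix Finset

/-- `L` is a lattice in ℝⁿ: the ℤ-span of an ℝ-basis of ℝⁿ. -/
def IsLat {n : ℕ} (L : Submodule ℤ (Fin n → ℝ)) : Prop :=
  ∃ b : Module.Basis (Fin n) ℝ (Fin n → ℝ), L = Submodule.span ℤ (Set.range ⇑b)

/-- Every perfect lattice is similar to an integral lattice. -/
theorem stmt0 {n : ℕ} (L : Submodule ℤ (Fin n → ℝ)) (hL : IsLat L)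
    (m : ℝ) (hm : IsLeast {r : ℝ | ∃ x ∈ L, x ≠ 0 ∧ x ⬝ᵥ x = r} m)
    (hperfect : ∀ A : Matrix (Fin n) (Fin n) ℝ, A.IsSymm →
      A ∈ Submodule.span ℝ ((fun x => vecMulVec x x) '' {x : Fin n → ℝ | x ∈ L ∧ x ⬝ᵥ x = m})) :
    ∃ (σ : (Fin n → ℝ) ≃ₗ[ℝ] (Fin n → ℝ)) (α : ℝ), 0 < α ∧
      (∀ x y : Fin n → ℝ, σ x ⬝ᵥ σ y = α * (x ⬝ᵥ y)) ∧
      (∀ x ∈ L, ∀ y ∈ L, ∃ k : ℤ, σ x ⬝ᵥ σ y = (k : ℝ)) := by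
  classical
  obtain ⟨b, hLb⟩ := hL
  obtain ⟨⟨x0, hx0L, hx0ne, hx0m⟩, hlb⟩ := hm
  -- m is positive
  have hmpos : 0 < m := by
    rcases lt_or_eq_of_le (Finset.sum_nonneg fun i _ => mul_self_nonneg (x0 i)) with h | h
    · simpa [← hx0m, dotProduct] using h
    · exact absurd (dotProduct_self_eq_zero.1 (by simpa [dotProduct] using h.symm)) hx0ne
  -- integer coordinates
  have hcoord : ∀ x ∈ L, ∃ c : Fin n → ℤ, x = ∑ i, (c i : ℝ) • b i := by
    intro x hx
    rw [hLb] at hx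
    obtain ⟨c, hc⟩ := (Submodule.mem_span_range_iff_exists_fun ℤ).1 hx
    exact ⟨c, by simp_rw [Int.cast_smul_eq_zsmul ℝ]; exact hc.symm⟩
  -- Gram expansion
  have hdot : ∀ c d : Fin n → ℝ, (∑ i, c i • b i) ⬝ᵥ (∑ j, d j • b j)
      = ∑ i, ∑ j, c i * d j * (b i ⬝ᵥ b j) := by
    intro c d
    simp only [dotProduct, Finset.sum_apply, Pi.smul_apply, smul_eq_mul]
    calc ∑ k, (∑ i, c i * b i k) * (∑ j, d j * b j k)
        = ∑ k, ∑ i, ∑ j, (c i * b i k) * (d j * b j k) := by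
          refine Finset.sum_congr rfl fun k _ => ?_
          rw [Finset.sum_mul_sum]
      _ = ∑ i, ∑ j, ∑ k, c i * d j * (b i k * b j k) := by
          rw [Finset.sum_comm]
          refine Finset.sum_congr rfl fun i _ => ?_
          rw [Finset.sum_comm]
          exact Finset.sum_congr rfl fun j _ => Finset.sum_congr rfl fun k _ => by ring
      _ = ∑ i, ∑ j, c i * d j * ∑ k, b i k * b j k := by
          exact Finset.sum_congr rfl fun i _ => Finset.sum_congr rfl fun j _ =>
            (Finset.mul_sum _ _ _).symm
  -- the basis matrix
  set e : Module.Basis (Fin n) ℝ (Fin n → ℝ) := Pi.basisFun ℝ (Fin n) with he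
  set B : Matrix (Fin n) (Fin n) ℝ := e.toMatrix b with hB
  set B' : Matrix (Fin n) (Fin n) ℝ := b.toMatrix e with hB'
  have hB'B : B' * B = 1 := b.toMatrix_mul_toMatrix_flip e
  have hBB' : B * B' = 1 := e.toMatrix_mul_toMatrix_flip b
  have hBv : ∀ c : Fin n → ℝ, B *ᵥ c = ∑ j, c j • b j := by
    intro c
    funext i
    simp only [Matrix.mulVec, dotProduct, hB, Module.Basis.toMatrix_apply, he,
      Pi.basisFun_repr, Finset.sum_apply, Pi.smul_apply, smul_eq_mul]
    exact Finset.sum_congr rfl fun j _ => mul_comm _ _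
  -- Claim U : a symmetric matrix orthogonal to all minimal projections is zero
  have hU : ∀ D : Matrix (Fin n) (Fin n) ℝ, D.IsSymm →
      (∀ x, x ∈ L → x ⬝ᵥ x = m → x ⬝ᵥ (D *ᵥ x) = 0) → D = 0 := by
    intro D hDs hD0
    set φ : Matrix (Fin n) (Fin n) ℝ →ₗ[ℝ] ℝ :=
      { toFun := fun A => ∑ i, ∑ j, D i j * A i j
        map_add' := by
          intro A C
          simp [Matrix.add_apply, mul_add, Finset.sum_add_distrib]
        map_smul' := by
          intro r A
          simp only [Matrix.smul_apply, smul_eq_mul, RingHom.id_apply, Finset.mul_sum]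
          exact Finset.sum_congr rfl fun i _ => Finset.sum_congr rfl fun j _ => by ring } with hφ
    have hker : Submodule.span ℝ ((fun x => vecMulVec x x) '' {x : Fin n → ℝ | x ∈ L ∧ x ⬝ᵥ x = m})
        ≤ LinearMap.ker φ := by
      rw [Submodule.span_le]
      rintro A ⟨x, ⟨hxL, hxm⟩, rfl⟩
      have hφx : φ (vecMulVec x x) = x ⬝ᵥ (D *ᵥ x) := by
        simp only [hφ, LinearMap.coe_mk, AddHom.coe_mk, vecMulVec_apply,
          dotProduct, Matrix.mulVec, Finset.mul_sum]
        refine Finset.sum_congr rfl fun i _ => Finset.sum_congr rfl fun j _ => by ring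
      simp only [SetLike.mem_coe, LinearMap.mem_ker, hφx]
      exact hD0 x hxL hxm
    have hφD : φ D = 0 := LinearMap.mem_ker.1 (hker (hperfect D hDs))
    have hsq : ∀ p ∈ (Finset.univ ×ˢ Finset.univ : Finset (Fin n × Fin n)),
        D p.1 p.2 * D p.1 p.2 = 0 := by
      rw [← Finset.sum_eq_zero_iff_of_nonneg fun p _ => mul_self_nonneg _]
      rw [Finset.sum_product]
      exact hφD
    funext i j
    exact mul_self_eq_zero.1 (hsq (i, j) (by simp))
  -- transfer to coordinates
  have hUc : ∀ S : Matrix (Fin n) (Fin n) ℝ, S.IsSymm →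
      (∀ c : Fin n → ℤ, (∑ i, (c i : ℝ) • b i) ∈ L →
        (∑ i, (c i : ℝ) • b i) ⬝ᵥ (∑ i, (c i : ℝ) • b i) = m →
        (fun i => (c i : ℝ)) ⬝ᵥ (S *ᵥ fun i => (c i : ℝ)) = 0) → S = 0 := by
    intro S hSs hS0
    have hT : Bᵀ * B'ᵀ = 1 := by rw [← Matrix.transpose_mul, hB'B, Matrix.transpose_one]
    have hE : B'ᵀ * S * B' = 0 := by
      apply hU
      · show (B'ᵀ * S * B')ᵀ = B'ᵀ * S * B'
        rw [Matrix.transpose_mul, Matrix.transpose_mul, Matrix.transpose_transpose, hSs.eq,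
          mul_assoc]
      · intro x hxL hxm
        obtain ⟨c, hc⟩ := hcoord x hxL
        set cR : Fin n → ℝ := fun i => (c i : ℝ) with hcR
        have hx : x = B *ᵥ cR := by rw [hc, hBv]
        have h2 : B' *ᵥ (B *ᵥ cR) = cR := by
          rw [Matrix.mulVec_mulVec, hB'B, Matrix.one_mulVec]
        have h1 : (B'ᵀ * S * B') *ᵥ x = B'ᵀ *ᵥ (S *ᵥ cR) := by
          rw [hx, Matrix.mulVec_mulVec, mul_assoc (B'ᵀ * S) B' B, hB'B, mul_one,
            ← Matrix.mulVec_mulVec]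
        rw [h1, hx, dotProduct_mulVec, Matrix.vecMul_transpose, h2]
        exact hS0 c (hc ▸ hxL) (hc ▸ hxm)
    have hrecover : S = Bᵀ * (B'ᵀ * S * B') * B := by
      calc S = 1 * S * 1 := by rw [one_mul, mul_one]
        _ = (Bᵀ * B'ᵀ) * S * (B' * B) := by rw [hT, hB'B]
        _ = Bᵀ * (B'ᵀ * S * B') * B := by simp only [mul_assoc]
    rw [hE] at hrecover
    simpa using hrecover
  -- the rational generators
  set genQ : Set (Matrix (Fin n) (Fin n) ℚ) := {A | ∃ c : Fin n → ℤ,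
      (∑ i, (c i : ℝ) • b i) ∈ L ∧
      (∑ i, (c i : ℝ) • b i) ⬝ᵥ (∑ i, (c i : ℝ) • b i) = m ∧
      A = Matrix.of fun i j => ((c i : ℚ) * (c j : ℚ))} with hgenQ
  -- symmetric rational matrices lie in the rational span of the generators
  have hQ : ∀ i₀ j₀ : Fin n, (Matrix.single i₀ j₀ (1 : ℚ) + Matrix.single j₀ i₀ 1) ∈
      Submodule.span ℚ genQ := by
    intro i₀ j₀
    by_contra hA
    have hπ : Submodule.Quotient.mk (p := Submodule.span ℚ genQ)
        (Matrix.single i₀ j₀ (1 : ℚ) + Matrix.single j₀ i₀ 1) ≠ 0 := by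
      intro h0
      exact hA ((Submodule.Quotient.mk_eq_zero _).1 h0)
    obtain ⟨f, hf⟩ : ∃ f : Module.Dual ℚ (Matrix (Fin n) (Fin n) ℚ ⧸ Submodule.span ℚ genQ),
        f (Submodule.Quotient.mk (Matrix.single i₀ j₀ (1 : ℚ) + Matrix.single j₀ i₀ 1)) ≠ 0 := by
      by_contra h
      push_neg at h
      exact hπ ((Module.forall_dual_apply_eq_zero_iff ℚ _).1 h)
    set g : Matrix (Fin n) (Fin n) ℚ →ₗ[ℚ] ℚ := f ∘ₗ (Submodule.span ℚ genQ).mkQ with hgdef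
    have hg0 : ∀ X ∈ Submodule.span ℚ genQ, g X = 0 := by
      intro X hX
      simp [hgdef, Submodule.mkQ_apply, (Submodule.Quotient.mk_eq_zero _).2 hX]
    have hgA : g (Matrix.single i₀ j₀ (1 : ℚ) + Matrix.single j₀ i₀ 1) ≠ 0 := by
      simpa [hgdef, Submodule.mkQ_apply] using hf
    set Dq : Matrix (Fin n) (Fin n) ℚ := Matrix.of fun i j => g (Matrix.single i j 1) with hDq
    have hgeval : ∀ X : Matrix (Fin n) (Fin n) ℚ, g X = ∑ i, ∑ j, X i j * Dq i j := by
      intro X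
      conv_lhs => rw [matrix_eq_sum_single X]
      rw [map_sum]
      refine Finset.sum_congr rfl fun i _ => ?_
      rw [map_sum]
      refine Finset.sum_congr rfl fun j _ => ?_
      have h : Matrix.single i j (X i j) = X i j • Matrix.single i j (1 : ℚ) := by
        rw [smul_single, smul_eq_mul, mul_one]
      rw [h, LinearMap.map_smul, smul_eq_mul]
      rfl
    set S : Matrix (Fin n) (Fin n) ℝ := Matrix.of fun i j => ((Dq i j + Dq j i : ℚ) : ℝ) with hSdef
    have hSsymm : S.IsSymm := by
      show Sᵀ = S
      funext i j
      simp [hSdef, Matrix.transpose_apply, add_comm]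
    have hS0 : S = 0 := by
      apply hUc S hSsymm
      intro c hcL hcm
      have h1 : g (Matrix.of fun i j => ((c i : ℚ) * (c j : ℚ))) = 0 :=
        hg0 _ (Submodule.subset_span ⟨c, hcL, hcm, rfl⟩)
      rw [hgeval] at h1
      have h2 : ∑ i, ∑ j, ((c i : ℚ) * (c j : ℚ)) * Dq j i = 0 := by
        rw [Finset.sum_comm]
        rw [← h1]
        exact Finset.sum_congr rfl fun i _ => Finset.sum_congr rfl fun j _ => by
          simp only [Matrix.of_apply]; ring
      have h3 : (∑ i, ∑ j, ((c i : ℚ) * (c j : ℚ)) * (Dq i j + Dq j i)) = 0 := by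
        have := congrArg₂ (· + ·) h1 h2
        simp only [add_zero] at this
        rw [← this, ← Finset.sum_add_distrib]
        refine Finset.sum_congr rfl fun i _ => ?_
        rw [← Finset.sum_add_distrib]
        refine Finset.sum_congr rfl fun j _ => by simp only [Matrix.of_apply]; ring
      show (fun i => (c i : ℝ)) ⬝ᵥ (S *ᵥ fun i => (c i : ℝ)) = 0
      have hcast : (fun i => (c i : ℝ)) ⬝ᵥ (S *ᵥ fun i => (c i : ℝ))
          = ((∑ i, ∑ j, ((c i : ℚ) * (c j : ℚ)) * (Dq i j + Dq j i) : ℚ) : ℝ) := by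
        simp only [dotProduct, Matrix.mulVec, hSdef, Matrix.of_apply, Finset.mul_sum]
        push_cast
        refine Finset.sum_congr rfl fun i _ => Finset.sum_congr rfl fun j _ => by ring
      rw [hcast, h3, Rat.cast_zero]
    have hDzero : ∀ i j, Dq i j + Dq j i = 0 := by
      intro i j
      have := congrFun (congrFun hS0 i) j
      simp only [hSdef, Matrix.of_apply, Matrix.zero_apply] at this
      exact_mod_cast this
    apply hgA
    rw [hgeval]
    simp only [Matrix.add_apply, Matrix.single, Matrix.of_apply, add_mul,
      Finset.sum_add_distrib, ite_mul, zero_mul, one_mul]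
    simp only [ite_and, Finset.sum_ite_irrel, Finset.sum_ite_eq, Finset.mem_univ, if_true,
      Finset.sum_const_zero]
    exact hDzero i₀ j₀
  -- rationality of the Gram matrix
  have hrat : ∀ i j : Fin n, ∃ q : ℚ, b i ⬝ᵥ b j = m * (q : ℝ) := by
    intro i₀ j₀
    obtain ⟨N, lam, v, hsum⟩ := Submodule.mem_span_set'.1 (hQ i₀ j₀)
    set ψ : Matrix (Fin n) (Fin n) ℚ →ₗ[ℚ] ℝ :=
      { toFun := fun X => ∑ i, ∑ j, (X i j : ℝ) * (b i ⬝ᵥ b j)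
        map_add' := by
          intro X Y
          simp [Matrix.add_apply, add_mul, Finset.sum_add_distrib, Rat.cast_add]
        map_smul' := by
          intro r X
          simp only [Matrix.smul_apply, Rat.smul_def, Rat.cast_mul, RingHom.id_apply,
            Finset.mul_sum, smul_eq_mul]
          exact Finset.sum_congr rfl fun i _ => Finset.sum_congr rfl fun j _ => by ring } with hψ
    have hψv : ∀ k : Fin N, ψ (v k : Matrix (Fin n) (Fin n) ℚ) = m := by
      intro k
      obtain ⟨c, hcL, hcm, hceq⟩ := (v k).2
      have hx : ψ (v k : Matrix (Fin n) (Fin n) ℚ)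
          = ∑ i, ∑ j, (c i : ℝ) * (c j : ℝ) * (b i ⬝ᵥ b j) := by
        simp only [hψ, LinearMap.coe_mk, AddHom.coe_mk, hceq, Matrix.of_apply]
        push_cast
        exact Finset.sum_congr rfl fun i _ => Finset.sum_congr rfl fun j _ => by ring
      rw [hx, ← hdot, hcm]
    have hstd : ∀ a a' : Fin n, ψ (Matrix.single a a' (1 : ℚ)) = b a ⬝ᵥ b a' := by
      intro a a'
      simp only [hψ, LinearMap.coe_mk, AddHom.coe_mk, Matrix.single, Matrix.of_apply,
        apply_ite (fun q : ℚ => (q : ℝ)), Rat.cast_one, Rat.cast_zero, ite_mul, one_mul,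
        zero_mul, ite_and, Finset.sum_ite_irrel, Finset.sum_ite_eq, Finset.mem_univ, if_true,
        Finset.sum_const_zero]
    have hψA : ψ (Matrix.single i₀ j₀ (1 : ℚ) + Matrix.single j₀ i₀ 1)
        = (∑ k, (lam k : ℝ)) * m := by
      rw [← hsum, map_sum, Finset.sum_mul]
      refine Finset.sum_congr rfl fun k _ => ?_
      rw [LinearMap.map_smul, hψv k, Rat.smul_def]
    have hψA2 : ψ (Matrix.single i₀ j₀ (1 : ℚ) + Matrix.single j₀ i₀ 1)
        = 2 * (b i₀ ⬝ᵥ b j₀) := by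
      rw [map_add, hstd, hstd, dotProduct_comm (b j₀) (b i₀), two_mul]
    refine ⟨(∑ k, lam k) / 2, ?_⟩
    have h2G : 2 * (b i₀ ⬝ᵥ b j₀) = (∑ k, (lam k : ℝ)) * m := by rw [← hψA2, hψA]
    push_cast
    linear_combination h2G / 2
  choose q hq using hrat
  set dden : ℤ := ∏ i : Fin n, ∏ j : Fin n, ((q i j).den : ℤ) with hdden
  have hdpos : 0 < dden := Finset.prod_pos fun i _ => Finset.prod_pos fun j _ => by
    exact_mod_cast (q i j).den_pos
  have hdvd : ∀ i j, ((q i j).den : ℤ) ∣ dden := by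
    intro i j
    refine dvd_trans (Finset.dvd_prod_of_mem (fun j => ((q i j).den : ℤ)) (Finset.mem_univ j)) ?_
    exact Finset.dvd_prod_of_mem (fun i => ∏ j : Fin n, ((q i j).den : ℤ)) (Finset.mem_univ i)
  have hint : ∀ i j, ∃ k : ℤ, (dden : ℚ) * q i j = (k : ℚ) := by
    intro i j
    obtain ⟨t, ht⟩ := hdvd i j
    have hden : ((q i j).den : ℚ) ≠ 0 := Nat.cast_ne_zero.2 (q i j).den_ne_zero
    have hmul : q i j * ((q i j).den : ℚ) = ((q i j).num : ℚ) := by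
      nth_rewrite 1 [← Rat.num_div_den (q i j)]
      rw [div_mul_cancel₀ _ hden]
    refine ⟨(q i j).num * t, ?_⟩
    calc (dden : ℚ) * q i j = (t : ℚ) * (q i j * ((q i j).den : ℚ)) := by
          rw [ht]; push_cast; ring
      _ = (t : ℚ) * ((q i j).num : ℚ) := by rw [hmul]
      _ = (((q i j).num * t : ℤ) : ℚ) := by push_cast; ring
  set α : ℝ := (dden : ℝ) / m with hα
  have hαpos : 0 < α := div_pos (by exact_mod_cast hdpos) hmpos
  have hαG : ∀ i j, ∃ k : ℤ, α * (b i ⬝ᵥ b j) = (k : ℝ) := by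
    intro i j
    obtain ⟨k, hk⟩ := hint i j
    refine ⟨k, ?_⟩
    have hkR : (dden : ℝ) * (q i j : ℝ) = (k : ℝ) := by exact_mod_cast congrArg (fun z : ℚ => (z : ℝ)) hk
    rw [hq i j, hα]
    field_simp
    linear_combination hkR
  choose K hK using hαG
  have hαL : ∀ x ∈ L, ∀ y ∈ L, ∃ k : ℤ, α * (x ⬝ᵥ y) = (k : ℝ) := by
    intro x hx y hy
    obtain ⟨c, rfl⟩ := hcoord x hx
    obtain ⟨d, rfl⟩ := hcoord y hy
    refine ⟨∑ i, ∑ j, c i * d j * K i j, ?_⟩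
    rw [hdot, Finset.mul_sum]
    push_cast
    refine Finset.sum_congr rfl fun i _ => ?_
    rw [Finset.mul_sum]
    refine Finset.sum_congr rfl fun j _ => ?_
    rw [← hK i j]
    ring
  have hspos : Real.sqrt α ≠ 0 := (Real.sqrt_pos.2 hαpos).ne'
  have hss : Real.sqrt α * Real.sqrt α = α := Real.mul_self_sqrt hαpos.le
  refine ⟨LinearEquiv.smulOfNeZero ℝ (Fin n → ℝ) (Real.sqrt α) hspos, α, hαpos, ?_, ?_⟩
  · intro x y
    show (Real.sqrt α • x) ⬝ᵥ (Real.sqrt α • y) = α * (x ⬝ᵥ y)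
    rw [smul_dotProduct, dotProduct_smul, smul_eq_mul, smul_eq_mul, ← mul_assoc,
      hss]
  · intro x hx y hy
    obtain ⟨k, hk⟩ := hαL x hx y hy
    refine ⟨k, ?_⟩
    show (Real.sqrt α • x) ⬝ᵥ (Real.sqrt α • y) = (k : ℝ)
    rw [smul_dotProduct, dotProduct_smul, smul_eq_mul, smul_eq_mul, ← mul_assoc,
      hss, hk]
end

section
/- Let L be a lattice in ℝ^n whose automorphism group acts irreducibly on ℝ^n. Then L is strongly eutactic, i.e., ∑_{x∈Min(L)} x·xᵀ = (min(L)|Min(L)|/n)·I_n. -/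
open Matrix Finset

/-- `σ` is an automorphism of the lattice `L`: an orthogonal map preserving `L`. -/
def IsAut {n : ℕ} (L : Submodule ℤ (Fin n → ℝ)) (σ : (Fin n → ℝ) ≃ₗ[ℝ] (Fin n → ℝ)) : Prop :=
  (∀ x y : Fin n → ℝ, σ x ⬝ᵥ σ y = x ⬝ᵥ y) ∧ (∀ x : Fin n → ℝ, x ∈ L ↔ σ x ∈ L)

lemma vecMulVec_mulVec' {n : ℕ} (x y v : Fin n → ℝ) :
    vecMulVec x y *ᵥ v = (y ⬝ᵥ v) • x := by
  ext i
  simp [vecMulVec, mulVec, dotProduct, Finset.mul_sum, mul_comm, mul_left_comm]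

/-- If the automorphism group of a lattice `L` acts irreducibly on ℝⁿ, then `L`
is strongly eutactic: `∑_{x ∈ Min(L)} x·xᵀ = (min(L)|Min(L)|/n)·I`. -/
theorem stmt3 {n : ℕ} (hn : 0 < n) (L : Submodule ℤ (Fin n → ℝ)) (hL : IsLat L)
    (m : ℝ) (hm : IsLeast {r : ℝ | ∃ x ∈ L, x ≠ 0 ∧ x ⬝ᵥ x = r} m)
    (X : Finset (Fin n → ℝ)) (hX : ∀ x, x ∈ X ↔ x ∈ L ∧ x ⬝ᵥ x = m)
    (hirr : ∀ W : Submodule ℝ (Fin n → ℝ),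
      (∀ σ : (Fin n → ℝ) ≃ₗ[ℝ] (Fin n → ℝ), IsAut L σ → ∀ w ∈ W, σ w ∈ W) →
      W = ⊥ ∨ W = ⊤) :
    ∑ x ∈ X, vecMulVec x x = (m * X.card / n) • (1 : Matrix (Fin n) (Fin n) ℝ) := by
  set A : Matrix (Fin n) (Fin n) ℝ := ∑ x ∈ X, vecMulVec x x with hA
  -- A is hermitian
  have hAh : A.IsHermitian := by
    unfold Matrix.IsHermitian
    rw [hA, conjTranspose_sum]
    refine Finset.sum_congr rfl fun x _ => ?_
    ext i j
    simp [vecMulVec, mul_comm]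
  -- mulVec formula
  have hAv : ∀ v, A *ᵥ v = ∑ x ∈ X, (x ⬝ᵥ v) • x := by
    intro v
    have key : ∀ s : Finset (Fin n → ℝ),
        (∑ x ∈ s, vecMulVec x x) *ᵥ v = ∑ x ∈ s, (vecMulVec x x *ᵥ v) := by
      intro s
      induction s using Finset.induction with
      | empty => simp [Matrix.zero_mulVec]
      | insert _ _ h ih =>
        rw [Finset.sum_insert h, Finset.sum_insert h, Matrix.add_mulVec, ih]
    rw [hA, key]
    exact Finset.sum_congr rfl fun x _ => vecMulVec_mulVec' x x v
  -- X mapped into itself by auts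
  have hmap : ∀ σ : (Fin n → ℝ) ≃ₗ[ℝ] (Fin n → ℝ), IsAut L σ → ∀ x ∈ X, σ x ∈ X := by
    intro σ hσ x hx
    rw [hX] at hx ⊢
    exact ⟨(hσ.2 x).1 hx.1, by rw [hσ.1 x x]; exact hx.2⟩
  have hauts : ∀ σ : (Fin n → ℝ) ≃ₗ[ℝ] (Fin n → ℝ), IsAut L σ → IsAut L σ.symm := by
    intro σ hσ
    constructor
    · intro x y
      have := hσ.1 (σ.symm x) (σ.symm y)
      simpa using this.symm
    · intro x
      have := hσ.2 (σ.symm x)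
      simpa using this.symm
  -- commutation
  have hcomm : ∀ σ : (Fin n → ℝ) ≃ₗ[ℝ] (Fin n → ℝ), IsAut L σ →
      ∀ v, A *ᵥ (σ v) = σ (A *ᵥ v) := by
    intro σ hσ v
    rw [hAv, hAv, map_sum]
    simp only [_root_.map_smul]
    refine Finset.sum_nbij' (fun x => σ.symm x) (fun x => σ x) ?_ ?_ ?_ ?_ ?_
    · intro x hx; exact hmap σ.symm (hauts σ hσ) x hx
    · intro x hx; exact hmap σ hσ x hx
    · intro x _; simp
    · intro x _; simp
    · intro x _
      have h1 : σ.symm x ⬝ᵥ v = x ⬝ᵥ σ v := by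
        have h2 := (hauts σ hσ).1 x (σ v)
        simpa using h2
      rw [LinearEquiv.apply_symm_apply, h1]
  -- eigenvector
  set lam : ℝ := hAh.eigenvalues ⟨0, hn⟩ with hlam
  set W : Submodule ℝ (Fin n → ℝ) :=
    LinearMap.ker (A.mulVecLin - lam • LinearMap.id) with hW
  have hWmem : ∀ v, v ∈ W ↔ A *ᵥ v = lam • v := by
    intro v
    simp [hW, LinearMap.mem_ker, sub_eq_zero]
  have hWne : W ≠ ⊥ := by
    intro hbot
    have hv : (⇑(hAh.eigenvectorBasis ⟨0, hn⟩) : Fin n → ℝ) ∈ W := by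
      rw [hWmem]
      exact hAh.mulVec_eigenvectorBasis ⟨0, hn⟩
    rw [hbot, Submodule.mem_bot] at hv
    have := hAh.eigenvectorBasis.toBasis.ne_zero ⟨0, hn⟩
    apply this
    ext i
    have := congrFun hv i
    simpa using this
  have hWtop : W = ⊤ := by
    have hinv : ∀ σ : (Fin n → ℝ) ≃ₗ[ℝ] (Fin n → ℝ), IsAut L σ → ∀ w ∈ W, σ w ∈ W := by
      intro σ hσ w hw
      rw [hWmem] at hw ⊢
      rw [hcomm σ hσ w, hw, _root_.map_smul]
    rcases hirr W hinv with h | h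
    · exact absurd h hWne
    · exact h
  -- A = lam • 1
  have hA1 : A = lam • (1 : Matrix (Fin n) (Fin n) ℝ) := by
    ext i j
    have hj : (Pi.single j 1 : Fin n → ℝ) ∈ W := hWtop ▸ Submodule.mem_top
    rw [hWmem] at hj
    have := congrFun hj i
    rw [Matrix.mulVec_single] at this
    simpa [Matrix.one_apply, Pi.single_apply, eq_comm, mul_comm] using this
  -- trace
  have htr : A.trace = m * X.card := by
    rw [hA, Matrix.trace_sum]
    have : ∀ x ∈ X, (vecMulVec x x).trace = m := by
      intro x hx
      have hxx := ((hX x).1 hx).2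
      rw [Matrix.trace]
      simpa [Matrix.diag, vecMulVec, dotProduct] using hxx
    rw [Finset.sum_congr rfl this]
    simp [mul_comm]
  have htr2 : A.trace = lam * n := by
    rw [hA1, Matrix.trace_smul, Matrix.trace_one]
    simp [mul_comm]
  have hlamval : lam = m * X.card / n := by
    field_simp
    rw [← htr2, htr]
  rw [hA1, hlamval]
end

section
/- Every strongly perfect lattice is perfect. -/
open Matrix Finset

lemma polar2 {n : ℕ} (X : Finset (Fin n → ℝ)) (c : ℝ)
    (hD4 : ∀ α : Fin n → ℝ, ∑ x ∈ X, (x ⬝ᵥ α) ^ 4 = 3 * c * (α ⬝ᵥ α) ^ 2)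
    (α β : Fin n → ℝ) :
    ∑ x ∈ X, (x ⬝ᵥ α) ^ 2 * (x ⬝ᵥ β) ^ 2
      = c * ((α ⬝ᵥ α) * (β ⬝ᵥ β) + 2 * (α ⬝ᵥ β) ^ 2) := by
  have key : (12 : ℝ) * ∑ x ∈ X, (x ⬝ᵥ α) ^ 2 * (x ⬝ᵥ β) ^ 2
      = ∑ x ∈ X, (x ⬝ᵥ (α + β)) ^ 4 + ∑ x ∈ X, (x ⬝ᵥ (α - β)) ^ 4
        - 2 * ∑ x ∈ X, (x ⬝ᵥ α) ^ 4 - 2 * ∑ x ∈ X, (x ⬝ᵥ β) ^ 4 := by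
    simp only [Finset.mul_sum, dotProduct_add, dotProduct_sub, ← Finset.sum_add_distrib,
      ← Finset.sum_sub_distrib]
    exact Finset.sum_congr rfl fun x _ => by ring
  rw [hD4, hD4, hD4, hD4] at key
  have h1 : (α + β) ⬝ᵥ (α + β) = α ⬝ᵥ α + 2 * (α ⬝ᵥ β) + β ⬝ᵥ β := by
    simp only [dotProduct_add, add_dotProduct, dotProduct_comm β α]; ring
  have h2 : (α - β) ⬝ᵥ (α - β) = α ⬝ᵥ α - 2 * (α ⬝ᵥ β) + β ⬝ᵥ β := by
    simp only [dotProduct_sub, sub_dotProduct, dotProduct_comm β α]; ring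
  rw [h1, h2] at key
  linear_combination key / 12

lemma polar3 {n : ℕ} (X : Finset (Fin n → ℝ)) (c : ℝ)
    (hD4 : ∀ α : Fin n → ℝ, ∑ x ∈ X, (x ⬝ᵥ α) ^ 4 = 3 * c * (α ⬝ᵥ α) ^ 2)
    (α γ δ : Fin n → ℝ) :
    ∑ x ∈ X, (x ⬝ᵥ α) ^ 2 * ((x ⬝ᵥ γ) * (x ⬝ᵥ δ))
      = c * ((α ⬝ᵥ α) * (γ ⬝ᵥ δ) + 2 * (α ⬝ᵥ γ) * (α ⬝ᵥ δ)) := by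
  have key : (2 : ℝ) * ∑ x ∈ X, (x ⬝ᵥ α) ^ 2 * ((x ⬝ᵥ γ) * (x ⬝ᵥ δ))
      = ∑ x ∈ X, (x ⬝ᵥ α) ^ 2 * (x ⬝ᵥ (γ + δ)) ^ 2
        - ∑ x ∈ X, (x ⬝ᵥ α) ^ 2 * (x ⬝ᵥ γ) ^ 2
        - ∑ x ∈ X, (x ⬝ᵥ α) ^ 2 * (x ⬝ᵥ δ) ^ 2 := by
    simp only [Finset.mul_sum, dotProduct_add, ← Finset.sum_sub_distrib]
    exact Finset.sum_congr rfl fun x _ => by ring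
  rw [polar2 X c hD4, polar2 X c hD4, polar2 X c hD4] at key
  have h1 : (γ + δ) ⬝ᵥ (γ + δ) = γ ⬝ᵥ γ + 2 * (γ ⬝ᵥ δ) + δ ⬝ᵥ δ := by
    simp only [dotProduct_add, add_dotProduct, dotProduct_comm δ γ]; ring
  have h2 : α ⬝ᵥ (γ + δ) = α ⬝ᵥ γ + α ⬝ᵥ δ := by simp [dotProduct_add]
  rw [h1, h2] at key
  linear_combination key / 2

lemma polar4 {n : ℕ} (X : Finset (Fin n → ℝ)) (c : ℝ)
    (hD4 : ∀ α : Fin n → ℝ, ∑ x ∈ X, (x ⬝ᵥ α) ^ 4 = 3 * c * (α ⬝ᵥ α) ^ 2)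
    (α β γ δ : Fin n → ℝ) :
    ∑ x ∈ X, (x ⬝ᵥ α) * (x ⬝ᵥ β) * ((x ⬝ᵥ γ) * (x ⬝ᵥ δ))
      = c * ((α ⬝ᵥ β) * (γ ⬝ᵥ δ) + (α ⬝ᵥ γ) * (β ⬝ᵥ δ) + (α ⬝ᵥ δ) * (β ⬝ᵥ γ)) := by
  have key : (2 : ℝ) * ∑ x ∈ X, (x ⬝ᵥ α) * (x ⬝ᵥ β) * ((x ⬝ᵥ γ) * (x ⬝ᵥ δ))
      = ∑ x ∈ X, (x ⬝ᵥ (α + β)) ^ 2 * ((x ⬝ᵥ γ) * (x ⬝ᵥ δ))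
        - ∑ x ∈ X, (x ⬝ᵥ α) ^ 2 * ((x ⬝ᵥ γ) * (x ⬝ᵥ δ))
        - ∑ x ∈ X, (x ⬝ᵥ β) ^ 2 * ((x ⬝ᵥ γ) * (x ⬝ᵥ δ)) := by
    simp only [Finset.mul_sum, dotProduct_add, ← Finset.sum_sub_distrib]
    exact Finset.sum_congr rfl fun x _ => by ring
  rw [polar3 X c hD4, polar3 X c hD4, polar3 X c hD4] at key
  have h1 : (α + β) ⬝ᵥ (α + β) = α ⬝ᵥ α + 2 * (α ⬝ᵥ β) + β ⬝ᵥ β := by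
    simp only [dotProduct_add, add_dotProduct, dotProduct_comm β α]; ring
  have h2 : (α + β) ⬝ᵥ γ = α ⬝ᵥ γ + β ⬝ᵥ γ := by simp [add_dotProduct]
  have h3 : (α + β) ⬝ᵥ δ = α ⬝ᵥ δ + β ⬝ᵥ δ := by simp [add_dotProduct]
  rw [h1, h2, h3] at key
  linear_combination key / 2

lemma moment4 {n : ℕ} (X : Finset (Fin n → ℝ)) (c : ℝ)
    (hD4 : ∀ α : Fin n → ℝ, ∑ x ∈ X, (x ⬝ᵥ α) ^ 4 = 3 * c * (α ⬝ᵥ α) ^ 2)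
    (i j k l : Fin n) :
    ∑ x ∈ X, x i * x j * (x k * x l)
      = c * (((if l = k then (if j = i then (1:ℝ) else 0) else 0)
          + if l = j then (if k = i then (1:ℝ) else 0) else 0)
          + if k = j then (if l = i then (1:ℝ) else 0) else 0) := by
  have := polar4 X c hD4 (Pi.single i 1) (Pi.single j 1) (Pi.single k 1) (Pi.single l 1)
  simpa [dotProduct_single, single_dotProduct, Pi.single_apply] using this

lemma sumQuadSq {n : ℕ} (X : Finset (Fin n → ℝ)) (c : ℝ)
    (hD4 : ∀ α : Fin n → ℝ, ∑ x ∈ X, (x ⬝ᵥ α) ^ 4 = 3 * c * (α ⬝ᵥ α) ^ 2)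
    (B : Matrix (Fin n) (Fin n) ℝ) :
    ∑ x ∈ X, (∑ i, ∑ j, B i j * x i * x j) ^ 2
      = c * ((∑ i, B i i) * (∑ k, B k k) + (∑ i, ∑ k, B i k * B i k)
          + ∑ i, ∑ k, B i k * B k i) := by
  have e1 : ∀ x : Fin n → ℝ, (∑ i, ∑ j, B i j * x i * x j) ^ 2
      = ∑ i, ∑ k, ∑ j, ∑ l, B i j * B k l * (x i * x j * (x k * x l)) := by
    intro x
    rw [sq, Finset.sum_mul_sum]
    refine Finset.sum_congr rfl fun i _ => ?_
    refine Finset.sum_congr rfl fun k _ => ?_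
    rw [Finset.sum_mul_sum]
    exact Finset.sum_congr rfl fun j _ => Finset.sum_congr rfl fun l _ => by ring
  calc ∑ x ∈ X, (∑ i, ∑ j, B i j * x i * x j) ^ 2
      = ∑ x ∈ X, ∑ i, ∑ k, ∑ j, ∑ l, B i j * B k l * (x i * x j * (x k * x l)) :=
        Finset.sum_congr rfl fun x _ => e1 x
    _ = ∑ i, ∑ k, ∑ j, ∑ l, B i j * B k l * ∑ x ∈ X, x i * x j * (x k * x l) := by
        rw [Finset.sum_comm]
        refine Finset.sum_congr rfl fun i _ => ?_
        rw [Finset.sum_comm]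
        refine Finset.sum_congr rfl fun k _ => ?_
        rw [Finset.sum_comm]
        refine Finset.sum_congr rfl fun j _ => ?_
        rw [Finset.sum_comm]
        exact Finset.sum_congr rfl fun l _ => (Finset.mul_sum _ _ _).symm
    _ = c * ((∑ i, B i i) * (∑ k, B k k) + (∑ i, ∑ k, B i k * B i k)
          + ∑ i, ∑ k, B i k * B k i) := by
        simp only [moment4 X c hD4]
        simp [mul_add, mul_ite, ite_mul, mul_zero, zero_mul, mul_one,
          Finset.sum_add_distrib, Finset.sum_ite_eq, Finset.sum_ite_eq',
          Finset.mul_sum, Finset.sum_mul]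
        refine congrArg₂ (· + ·) (congrArg₂ (· + ·) ?_ ?_) ?_ <;>
          exact Finset.sum_congr rfl fun i _ => Finset.sum_congr rfl fun k _ => by ring

lemma quadZero {n : ℕ} (X : Finset (Fin n → ℝ)) (c : ℝ) (hc : 0 < c)
    (hD4 : ∀ α : Fin n → ℝ, ∑ x ∈ X, (x ⬝ᵥ α) ^ 4 = 3 * c * (α ⬝ᵥ α) ^ 2)
    (B : Matrix (Fin n) (Fin n) ℝ) (hsym : ∀ i j, B i j = B j i)
    (hv : ∀ x ∈ X, ∑ i, ∑ j, B i j * x i * x j = 0) :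
    ∀ i j, B i j = 0 := by
  have hz : ∑ x ∈ X, (∑ i, ∑ j, B i j * x i * x j) ^ 2 = 0 :=
    Finset.sum_eq_zero fun x hx => by rw [hv x hx]; ring
  rw [sumQuadSq X c hD4 B] at hz
  have hsame : (∑ i, ∑ k, B i k * B k i) = ∑ i, ∑ k, B i k * B i k :=
    Finset.sum_congr rfl fun i _ => Finset.sum_congr rfl fun k _ => by rw [hsym k i]
  rw [hsame] at hz
  have hPnn : (0:ℝ) ≤ ∑ i, ∑ k, B i k * B i k :=
    Finset.sum_nonneg fun i _ => Finset.sum_nonneg fun k _ => mul_self_nonneg _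
  have htr : (0:ℝ) ≤ (∑ i, B i i) * (∑ k, B k k) := mul_self_nonneg _
  have hP : ∑ i, ∑ k, B i k * B i k = 0 := by
    rcases mul_eq_zero.mp hz with h | h
    · exact absurd h (ne_of_gt hc)
    · linarith
  intro i j
  have h1 := (Finset.sum_eq_zero_iff_of_nonneg fun i _ =>
    Finset.sum_nonneg fun k _ => mul_self_nonneg (B i k)).mp hP i (Finset.mem_univ i)
  have h2 := (Finset.sum_eq_zero_iff_of_nonneg fun k _ =>
    mul_self_nonneg (B i k)).mp h1 j (Finset.mem_univ j)
  exact mul_self_eq_zero.mp h2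

/-- Every strongly perfect lattice (its minimal vectors form a spherical
4-design, expressed by the moment equations (D2) and (D4)) is perfect: the
rank-one matrices `x·xᵀ`, `x ∈ Min(L)`, span the symmetric matrices. -/
theorem stmt4 {n : ℕ} (hn : 0 < n) (L : Submodule ℤ (Fin n → ℝ)) (hL : IsLat L)
    (m : ℝ) (hm : IsLeast {r : ℝ | ∃ x ∈ L, x ≠ 0 ∧ x ⬝ᵥ x = r} m)
    (X : Finset (Fin n → ℝ)) (hX : ∀ x, x ∈ X ↔ x ∈ L ∧ x ⬝ᵥ x = m)
    (hD2 : ∀ α : Fin n → ℝ, ∑ x ∈ X, (x ⬝ᵥ α) ^ 2 = (X.card * m / n) * (α ⬝ᵥ α))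
    (hD4 : ∀ α : Fin n → ℝ,
      ∑ x ∈ X, (x ⬝ᵥ α) ^ 4 = (3 * X.card * m ^ 2 / (n * (n + 2))) * (α ⬝ᵥ α) ^ 2) :
    ∀ A : Matrix (Fin n) (Fin n) ℝ, A.IsSymm →
      A ∈ Submodule.span ℝ ((fun x => vecMulVec x x) '' (X : Set (Fin n → ℝ))) := by
  intro A hA
  set c : ℝ := (X.card : ℝ) * m ^ 2 / (n * (n + 2)) with hcdef
  have hD4' : ∀ α : Fin n → ℝ, ∑ x ∈ X, (x ⬝ᵥ α) ^ 4 = 3 * c * (α ⬝ᵥ α) ^ 2 := by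
    intro α; rw [hD4 α, hcdef]; ring
  -- positivity of c
  obtain ⟨x0, hx0L, hx0ne, hx0m⟩ := hm.1
  have hmpos : 0 < m := by
    rcases lt_or_eq_of_le (show (0:ℝ) ≤ m from hx0m ▸ Finset.sum_nonneg
      fun i _ => mul_self_nonneg (x0 i)) with h | h
    · exact h
    · exact absurd (dotProduct_self_eq_zero.mp (hx0m.trans h.symm)) hx0ne
  have hx0X : x0 ∈ X := (hX x0).mpr ⟨hx0L, hx0m⟩
  have hcardpos : (0:ℝ) < X.card := by
    exact_mod_cast Finset.card_pos.mpr ⟨x0, hx0X⟩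
  have hnpos : (0:ℝ) < n := by exact_mod_cast hn
  have hc : 0 < c := by
    apply div_pos (mul_pos hcardpos (pow_pos hmpos 2))
    nlinarith
  by_contra hnot
  obtain ⟨f, hfA, hker⟩ := Submodule.exists_dual_map_eq_bot_of_notMem hnot inferInstance
  -- the matrix of the functional f
  set B : Matrix (Fin n) (Fin n) ℝ := Matrix.of fun i j => f (Matrix.single i j 1) with hBdef
  have hfM : ∀ M : Matrix (Fin n) (Fin n) ℝ, f M = ∑ i, ∑ j, M i j * B i j := by
    intro M
    conv_lhs => rw [matrix_eq_sum_single M]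
    rw [map_sum]
    refine Finset.sum_congr rfl fun i _ => ?_
    rw [map_sum]
    refine Finset.sum_congr rfl fun j _ => ?_
    have : Matrix.single i j (M i j) = M i j • Matrix.single i j (1:ℝ) := by
      rw [smul_single, smul_eq_mul, mul_one]
    rw [this, f.map_smul, smul_eq_mul, hBdef]
    rfl
  have hvanish : ∀ x ∈ X, ∑ i, ∑ j, B i j * x i * x j = 0 := by
    intro x hx
    have hmem : vecMulVec x x ∈ Submodule.span ℝ
        ((fun x => vecMulVec x x) '' (X : Set (Fin n → ℝ))) :=
      Submodule.subset_span ⟨x, Finset.mem_coe.mpr hx, rfl⟩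
    have h0 : f (vecMulVec x x) = 0 := by
      have := Submodule.mem_map_of_mem (f := f) hmem
      rw [hker] at this
      simpa using this
    rw [hfM] at h0
    rw [← h0]
    exact Finset.sum_congr rfl fun i _ => Finset.sum_congr rfl fun j _ => by
      rw [vecMulVec_apply]; ring
  -- symmetrized matrix
  set B' : Matrix (Fin n) (Fin n) ℝ := Matrix.of fun i j => (B i j + B j i) / 2 with hB'def
  have hswap : ∀ x : Fin n → ℝ, ∑ i, ∑ j, B j i * x i * x j = ∑ i, ∑ j, B i j * x i * x j := by
    intro x
    rw [Finset.sum_comm]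
    exact Finset.sum_congr rfl fun i _ => Finset.sum_congr rfl fun j _ => by ring
  have hv' : ∀ x ∈ X, ∑ i, ∑ j, B' i j * x i * x j = 0 := by
    intro x hx
    have : ∑ i, ∑ j, B' i j * x i * x j
        = (∑ i, ∑ j, B i j * x i * x j + ∑ i, ∑ j, B j i * x i * x j) / 2 := by
      rw [← Finset.sum_add_distrib]
      rw [Finset.sum_div]
      refine Finset.sum_congr rfl fun i _ => ?_
      rw [← Finset.sum_add_distrib, Finset.sum_div]
      refine Finset.sum_congr rfl fun j _ => ?_
      simp only [hB'def, Matrix.of_apply]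
      ring
    rw [this, hswap x, hvanish x hx]
    ring
  have hB'zero : ∀ i j, B' i j = 0 :=
    quadZero X c hc hD4' B' (fun i j => by simp only [hB'def, Matrix.of_apply]; ring) hv'
  have hskew : ∀ i j, B j i = -B i j := by
    intro i j
    have := hB'zero i j
    simp only [hB'def, Matrix.of_apply] at this
    linarith [this]
  -- conclude f A = 0
  have hAsymm : ∀ i j, A j i = A i j := fun i j => by
    have := congr_fun (congr_fun hA j) i
    rw [Matrix.transpose_apply] at this
    exact this.symm
  have hS : f A = - f A := by
    rw [hfM A]
    conv_lhs => rw [Finset.sum_comm]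
    rw [← Finset.sum_neg_distrib]
    refine Finset.sum_congr rfl fun j _ => ?_
    rw [← Finset.sum_neg_distrib]
    refine Finset.sum_congr rfl fun i _ => ?_
    rw [hAsymm j i, hskew j i]
    ring
  exact hfA (by linarith [hS])
end

section
/- Let L be a strongly perfect lattice of dimension n. Then min(L)·min(L^♯) ≥ (n+2)/3. -/
open Matrix Finset

lemma int_sq_le_fourth (k : ℤ) : (k : ℝ) ^ 2 ≤ (k : ℝ) ^ 4 := by
  rcases eq_or_ne k 0 with rfl | h
  · norm_num
  · have h1 : (1 : ℝ) ≤ (k : ℝ) ^ 2 := by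
      have := Int.one_le_abs (by exact_mod_cast h : k ≠ 0)
      have : (1 : ℝ) ≤ |(k : ℝ)| := by exact_mod_cast (by push_cast at *; exact_mod_cast this)
      nlinarith [abs_nonneg (k : ℝ), sq_abs (k : ℝ)]
    nlinarith [sq_nonneg (k : ℝ)]

/-- For a strongly perfect lattice `L` of dimension `n` (minimal vectors satisfy
the design equations (D2) and (D4)), one has `min(L)·min(L♯) ≥ (n+2)/3`. -/
theorem stmt6 {n : ℕ} (hn : 0 < n) (L Ldual : Submodule ℤ (Fin n → ℝ)) (hL : IsLat L)
    (hdual : ∀ x : Fin n → ℝ, x ∈ Ldual ↔ ∀ ℓ ∈ L, ∃ k : ℤ, x ⬝ᵥ ℓ = (k : ℝ))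
    (m m' : ℝ)
    (hm : IsLeast {r : ℝ | ∃ x ∈ L, x ≠ 0 ∧ x ⬝ᵥ x = r} m)
    (hm' : IsLeast {r : ℝ | ∃ x ∈ Ldual, x ≠ 0 ∧ x ⬝ᵥ x = r} m')
    (X : Finset (Fin n → ℝ)) (hX : ∀ x, x ∈ X ↔ x ∈ L ∧ x ⬝ᵥ x = m)
    (hD2 : ∀ α : Fin n → ℝ, ∑ x ∈ X, (x ⬝ᵥ α) ^ 2 = (X.card * m / n) * (α ⬝ᵥ α))
    (hD4 : ∀ α : Fin n → ℝ,
      ∑ x ∈ X, (x ⬝ᵥ α) ^ 4 = (3 * X.card * m ^ 2 / (n * (n + 2))) * (α ⬝ᵥ α) ^ 2) :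
    m * m' ≥ (n + 2) / 3 := by
  obtain ⟨⟨x0, hx0L, hx0ne, hx0m⟩, hmlb⟩ := hm
  obtain ⟨⟨α, hαL, hαne, hαm'⟩, hm'lb⟩ := hm'
  -- positivity of m and m'
  have hdotpos : ∀ v : Fin n → ℝ, v ≠ 0 → 0 < v ⬝ᵥ v := by
    intro v hv
    have h0 : 0 ≤ v ⬝ᵥ v := Finset.sum_nonneg fun i _ => mul_self_nonneg _
    rcases h0.lt_or_eq with h | h
    · exact h
    · exact absurd (dotProduct_self_eq_zero.mp h.symm) hv
  have hmpos : 0 < m := hx0m ▸ hdotpos x0 hx0ne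
  have hm'pos : 0 < m' := hαm' ▸ hdotpos α hαne
  have hXne : x0 ∈ X := (hX x0).mpr ⟨hx0L, hx0m⟩
  have hC : (0 : ℝ) < X.card := by
    exact_mod_cast Finset.card_pos.mpr ⟨x0, hXne⟩
  have hN : (0 : ℝ) < n := by exact_mod_cast hn
  -- integrality: for x ∈ X, (x ⬝ᵥ α)^2 ≤ (x ⬝ᵥ α)^4
  have key : ∑ x ∈ X, (x ⬝ᵥ α) ^ 2 ≤ ∑ x ∈ X, (x ⬝ᵥ α) ^ 4 := by
    apply Finset.sum_le_sum
    intro x hx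
    obtain ⟨k, hk⟩ := (hdual α).mp hαL x ((hX x).mp hx).1
    have hcomm : x ⬝ᵥ α = (k : ℝ) := by rw [dotProduct_comm]; exact hk
    rw [hcomm]
    exact int_sq_le_fourth k
  rw [hD2 α, hD4 α, hαm'] at key
  -- key : X.card * m / n * m' ≤ 3 * X.card * m ^ 2 / (n * (n + 2)) * m' ^ 2
  have hN2 : (0 : ℝ) < (n : ℝ) * ((n : ℝ) + 2) := by positivity
  rw [ge_iff_le, div_le_iff₀ (by norm_num : (0:ℝ) < 3)]
  rw [div_mul_eq_mul_div, div_mul_eq_mul_div, div_le_div_iff₀ hN hN2] at key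
  nlinarith [mul_pos (mul_pos (mul_pos hC hmpos) hm'pos) hN]
end

section
/- Let L be a lattice satisfying the design equations (D2) and (D4), and let α ∈ L^♯ be a nonzero dual vector with (x,α) ∈ {0, ±1} for all x ∈ Min(L). Then 3·min(L)·(α,α) ≥ n+2. -/
open Matrix Finset

/-- If `L` satisfies the design equations (D2) and (D4) and `α ∈ L♯` is a
nonzero dual vector with `(x,α) ∈ {0,±1}` for all minimal vectors `x`, then
`3·min(L)·(α,α) ≥ n+2`. -/
theorem stmt7 {n : ℕ} (hn : 0 < n) (L : Submodule ℤ (Fin n → ℝ)) (hL : IsLat L)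
    (m : ℝ) (hm : IsLeast {r : ℝ | ∃ x ∈ L, x ≠ 0 ∧ x ⬝ᵥ x = r} m)
    (X : Finset (Fin n → ℝ)) (hX : ∀ x, x ∈ X ↔ x ∈ L ∧ x ⬝ᵥ x = m)
    (hD2 : ∀ α : Fin n → ℝ, ∑ x ∈ X, (x ⬝ᵥ α) ^ 2 = (X.card * m / n) * (α ⬝ᵥ α))
    (hD4 : ∀ α : Fin n → ℝ,
      ∑ x ∈ X, (x ⬝ᵥ α) ^ 4 = (3 * X.card * m ^ 2 / (n * (n + 2))) * (α ⬝ᵥ α) ^ 2)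
    (α : Fin n → ℝ) (hα0 : α ≠ 0)
    (hαdual : ∀ ℓ ∈ L, ∃ k : ℤ, α ⬝ᵥ ℓ = (k : ℝ))
    (hval : ∀ x ∈ X, x ⬝ᵥ α = 0 ∨ x ⬝ᵥ α = 1 ∨ x ⬝ᵥ α = -1) :
    3 * m * (α ⬝ᵥ α) ≥ n + 2 := by
  obtain ⟨⟨x0, hx0L, hx0ne, hx0m⟩, -⟩ := hm
  have hmpos : 0 < m := by
    rw [← hx0m]
    have h1 : x0 ⬝ᵥ x0 ≠ 0 := by
      simpa [dotProduct_self_eq_zero] using hx0ne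
    have h2 : 0 ≤ x0 ⬝ᵥ x0 := Finset.sum_nonneg fun i _ => mul_self_nonneg _
    exact lt_of_le_of_ne h2 (Ne.symm h1)
  have hApos : 0 < α ⬝ᵥ α := by
    have h1 : α ⬝ᵥ α ≠ 0 := by
      simpa [dotProduct_self_eq_zero] using hα0
    have h2 : 0 ≤ α ⬝ᵥ α := Finset.sum_nonneg fun i _ => mul_self_nonneg _
    exact lt_of_le_of_ne h2 (Ne.symm h1)
  have hx0X : x0 ∈ X := (hX x0).2 ⟨hx0L, hx0m⟩
  have hcpos : 0 < (X.card : ℝ) := by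
    exact_mod_cast Finset.card_pos.2 ⟨x0, hx0X⟩
  have hsum : ∑ x ∈ X, (x ⬝ᵥ α) ^ 2 = ∑ x ∈ X, (x ⬝ᵥ α) ^ 4 := by
    refine Finset.sum_congr rfl fun x hx => ?_
    rcases hval x hx with h | h | h <;> rw [h] <;> norm_num
  have key : (X.card * m / n) * (α ⬝ᵥ α)
      = (3 * X.card * m ^ 2 / (n * (n + 2))) * (α ⬝ᵥ α) ^ 2 := by
    rw [← hD2 α, ← hD4 α, hsum]
  have hnpos : (0 : ℝ) < n := by exact_mod_cast hn
  have hn2 : (0 : ℝ) < (n : ℝ) + 2 := by linarith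
  have heq : 3 * m * (α ⬝ᵥ α) = n + 2 := by
    field_simp at key
    nlinarith [key, mul_pos (mul_pos (mul_pos hcpos hmpos) hApos) hnpos]
  linarith
end

section
/- If the minimal vectors of each indecomposable root lattice R_i of dimension n_i in an orthogonal decomposition R₁ ⊥ … ⊥ R_s of the root sublattice of a 24-dimensional even unimodular lattice L satisfy ∑_{x∈Min(R_i)}(x,α)² = (2|Min(R_i)|/n_i)(α,α) for α in the span of R_i, and Min(L) satisfies ∑_{x∈Min(L)}(x,α)² = (2|Min(L)|/24)(α,α) for all α ∈ ℝ^24, and the root lattice has full rank, then |Min(R_i)|/n_i = |Min(L)|/24 for every i. -/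
open Matrix Finset

/-- If the minimal vectors of each indecomposable component `R i` (of dimension
`nd i`) of the root sublattice of a 24-dimensional even unimodular lattice form
a 2-design on the span of `R i`, the components are pairwise orthogonal and
partition `Min(L)`, each component is nonzero (full rank), and `Min(L)` is a
2-design, then the Coxeter numbers agree: `|Min(R i)|/nd i = |Min(L)|/24`. -/
theorem stmt9 (s : ℕ) (R : Fin s → Finset (Fin 24 → ℝ)) (nd : Fin s → ℕ)
    (hnd : ∀ i, 0 < nd i)
    (MinL : Finset (Fin 24 → ℝ))
    (hpart : MinL = Finset.univ.biUnion R)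
    (hdisj : ∀ i j, i ≠ j → Disjoint (R i) (R j))
    (horth : ∀ i j, i ≠ j → ∀ x ∈ R i, ∀ y ∈ R j, x ⬝ᵥ y = 0)
    (hnontriv : ∀ i, ∃ x ∈ R i, x ≠ (0 : Fin 24 → ℝ))
    (hcomp : ∀ i, ∀ α ∈ Submodule.span ℝ ((R i : Set (Fin 24 → ℝ))),
      ∑ x ∈ R i, (x ⬝ᵥ α) ^ 2 = (2 * (R i).card / nd i) * (α ⬝ᵥ α))
    (hglob : ∀ α : Fin 24 → ℝ,
      ∑ x ∈ MinL, (x ⬝ᵥ α) ^ 2 = (2 * MinL.card / 24) * (α ⬝ᵥ α)) :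
    ∀ i, ((R i).card : ℝ) / nd i = (MinL.card : ℝ) / 24 := by
  intro i
  obtain ⟨α, hαR, hα0⟩ := hnontriv i
  have hspan : α ∈ Submodule.span ℝ ((R i : Set (Fin 24 → ℝ))) :=
    Submodule.subset_span hαR
  have hsum : ∑ x ∈ MinL, (x ⬝ᵥ α) ^ 2 = ∑ x ∈ R i, (x ⬝ᵥ α) ^ 2 := by
    rw [hpart, Finset.sum_biUnion]
    · rw [Finset.sum_eq_single i]
      · intro j _ hji
        apply Finset.sum_eq_zero
        intro x hx
        rw [horth j i hji x hx α hαR]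
        ring
      · intro h; exact absurd (Finset.mem_univ i) h
    · intro a _ b _ hab
      exact hdisj a b hab
  have h1 := hglob α
  rw [hsum, hcomp i α hspan] at h1
  have hd : α ⬝ᵥ α ≠ 0 := by
    intro h
    exact hα0 ((dotProduct_self_eq_zero).mp h)
  have h2 : 2 * ((R i).card : ℝ) / nd i = 2 * (MinL.card : ℝ) / 24 :=
    mul_right_cancel₀ hd h1
  have h3 : (2 : ℝ) * ((R i).card / nd i) = 2 * ((MinL.card : ℝ) / 24) := by
    rw [mul_div_assoc] at h2; rw [h2, mul_div_assoc]
  exact mul_left_cancel₀ two_ne_zero h3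
end

section
/- Let L be an even unimodular lattice with no roots (min(L) ≥ 4) and let v ∈ L with (v,v) ∈ 8ℤ. Then any two roots x ≠ ±y in the neighbor lattice L^(v) = L_v + ℤ(v/2) are orthogonal to each other. -/
open Matrix Finset

lemma dps_nonneg {n : ℕ} (w : Fin n → ℝ) : 0 ≤ w ⬝ᵥ w :=
  Finset.sum_nonneg fun i _ => mul_self_nonneg _

/-- Let `L` be an even unimodular lattice with no roots, and `v ∈ L` with
`(v,v) ∈ 8ℤ`. Then any two roots `x ≠ ±y` of the neighbor
`L^(v) = L_v + ℤ(v/2)` are orthogonal. -/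
theorem stmt10 {n : ℕ} (L : Submodule ℤ (Fin n → ℝ)) (hL : IsLat L)
    (heven : ∀ ℓ ∈ L, ∃ k : ℤ, ℓ ⬝ᵥ ℓ = 2 * (k : ℝ))
    (hunimod : ∀ x : Fin n → ℝ, x ∈ L ↔ ∀ ℓ ∈ L, ∃ k : ℤ, x ⬝ᵥ ℓ = (k : ℝ))
    (hnoroots : ∀ ℓ ∈ L, ℓ ⬝ᵥ ℓ ≠ 2)
    (v : Fin n → ℝ) (hv : v ∈ L) (hv8 : ∃ k : ℤ, v ⬝ᵥ v = 8 * (k : ℝ))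
    (M : Set (Fin n → ℝ))
    (hM : M = {z : Fin n → ℝ | ∃ ℓ ∈ L, (∃ k : ℤ, ℓ ⬝ᵥ v = 2 * (k : ℝ)) ∧
      ∃ j : ℤ, z = ℓ + (j : ℝ) • ((1 / 2 : ℝ) • v)}) :
    ∀ x ∈ M, ∀ y ∈ M, x ⬝ᵥ x = 2 → y ⬝ᵥ y = 2 → x ≠ y → x ≠ -y → x ⬝ᵥ y = 0 := by
  subst hM
  rintro x ⟨ℓ₁, hℓ₁, ⟨m₁, hm₁⟩, j₁, rfl⟩ y ⟨ℓ₂, hℓ₂, ⟨m₂, hm₂⟩, j₂, rfl⟩ hx2 hy2 hxy hxny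
  obtain ⟨t, ht⟩ := hv8
  obtain ⟨k₁₂, hk₁₂⟩ := (hunimod ℓ₁).mp hℓ₁ ℓ₂ hℓ₂
  set x := ℓ₁ + (j₁ : ℝ) • ((1 / 2 : ℝ) • v) with hxdef
  set y := ℓ₂ + (j₂ : ℝ) • ((1 / 2 : ℝ) • v) with hydef
  have hvℓ₂ : v ⬝ᵥ ℓ₂ = 2 * (m₂ : ℝ) := by rw [dotProduct_comm]; exact hm₂
  set S : ℤ := k₁₂ + j₂ * m₁ + j₁ * m₂ + 2 * j₁ * j₂ * t with hSdef
  have hS : x ⬝ᵥ y = (S : ℝ) := by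
    rw [hxdef, hydef]
    simp only [add_dotProduct, dotProduct_add, smul_dotProduct, dotProduct_smul,
      smul_eq_mul, hk₁₂, hm₁, hvℓ₂, ht, hSdef]
    push_cast
    ring
  -- membership helper
  have hmem : ∀ (ℓ : Fin n → ℝ), ℓ ∈ L → ∀ c : ℤ, ℓ + (c : ℝ) • v ∈ L := by
    intro ℓ hℓ c
    rw [Int.cast_smul_eq_zsmul ℝ c v]
    exact L.add_mem hℓ (L.smul_mem c hv)
  -- case on parities
  rcases Int.even_or_odd j₁ with ⟨a, ha⟩ | ⟨a, ha⟩
  · -- x ∈ L, contradiction with no roots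
    exfalso
    have hxL : x ∈ L := by
      have hx' : x = ℓ₁ + (a : ℝ) • v := by
        rw [hxdef, ha]; push_cast; module
      rw [hx']; exact hmem ℓ₁ hℓ₁ a
    exact hnoroots x hxL hx2
  rcases Int.even_or_odd j₂ with ⟨b, hb⟩ | ⟨b, hb⟩
  · exfalso
    have hyL : y ∈ L := by
      have hy' : y = ℓ₂ + (b : ℝ) • v := by
        rw [hydef, hb]; push_cast; module
      rw [hy']; exact hmem ℓ₂ hℓ₂ b
    exact hnoroots y hyL hy2
  · -- both odd
    have hsubL : x - y ∈ L := by
      have h' : x - y = (ℓ₁ - ℓ₂) + ((a - b : ℤ) : ℝ) • v := by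
        rw [hxdef, hydef, ha, hb]; push_cast; module
      rw [h']; exact hmem _ (L.sub_mem hℓ₁ hℓ₂) (a - b)
    have haddL : x + y ∈ L := by
      have h' : x + y = (ℓ₁ + ℓ₂) + ((a + b + 1 : ℤ) : ℝ) • v := by
        rw [hxdef, hydef, ha, hb]; push_cast; module
      rw [h']; exact hmem _ (L.add_mem hℓ₁ hℓ₂) (a + b + 1)
    have hyx : y ⬝ᵥ x = (S : ℝ) := by rw [dotProduct_comm]; exact hS
    have hsub : (x - y) ⬝ᵥ (x - y) = 4 - 2 * (S : ℝ) := by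
      simp only [sub_dotProduct, dotProduct_sub, hx2, hy2, hS, hyx]; ring
    have hadd : (x + y) ⬝ᵥ (x + y) = 4 + 2 * (S : ℝ) := by
      simp only [add_dotProduct, dotProduct_add, hx2, hy2, hS, hyx]; ring
    have h1 : 4 - 2 * (S : ℝ) ≠ 2 := hsub ▸ hnoroots _ hsubL
    have h2 : 4 + 2 * (S : ℝ) ≠ 2 := hadd ▸ hnoroots _ haddL
    have h3 : 4 - 2 * (S : ℝ) ≠ 0 := by
      rw [← hsub]
      intro h
      exact hxy (sub_eq_zero.mp (dotProduct_self_eq_zero.mp h))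
    have h4 : 4 + 2 * (S : ℝ) ≠ 0 := by
      rw [← hadd]
      intro h
      exact hxny (eq_neg_of_add_eq_zero_left (by
        have := dotProduct_self_eq_zero.mp h
        linear_combination (norm := abel) this))
    have h5 : (0:ℝ) ≤ 4 - 2 * (S : ℝ) := hsub ▸ dps_nonneg _
    have h6 : (0:ℝ) ≤ 4 + 2 * (S : ℝ) := hadd ▸ dps_nonneg _
    have hS0 : S = 0 := by
      have e1 : S ≤ 2 := by exact_mod_cast (by linarith : (S:ℝ) ≤ 2)
      have e2 : -2 ≤ S := by exact_mod_cast (by linarith : (-2:ℝ) ≤ S)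
      have e3 : S ≠ 1 := by intro h; rw [h] at h1; norm_num at h1
      have e4 : S ≠ -1 := by intro h; rw [h] at h2; norm_num at h2
      have e5 : S ≠ 2 := by intro h; rw [h] at h3; norm_num at h3
      have e6 : S ≠ -2 := by intro h; rw [h] at h4; norm_num at h4
      omega
    rw [hS, hS0]; norm_num
end

section
/- Let L be a unimodular lattice in ℝ^n and F = {v₁,…,v_n} ⊂ L a p-frame (pairwise orthogonal vectors with (v_i,v_i) = p, p prime). Then C(L,F) = {(ā₁,…,ā_n) ∈ 𝔽_p^n : ∑ a_i v_i ∈ L, a_i ∈ (1/p)ℤ} is a self-dual code in 𝔽_p^n. -/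
open Matrix Finset

/-- If `L` is a unimodular lattice and `{v₁,…,v_n} ⊂ L` a `p`-frame, then the
code `C(L,F) = {(ā₁,…,ā_n) : ∑ aᵢvᵢ ∈ L, aᵢ ∈ (1/p)ℤ}` is self-dual in `𝔽_pⁿ`. -/
theorem stmt11 {n : ℕ} (p : ℕ) (hp : p.Prime)
    (L : Submodule ℤ (Fin n → ℝ)) (hL : IsLat L)
    (hunimod : ∀ x : Fin n → ℝ, x ∈ L ↔ ∀ ℓ ∈ L, ∃ k : ℤ, x ⬝ᵥ ℓ = (k : ℝ))
    (v : Fin n → (Fin n → ℝ)) (hvL : ∀ i, v i ∈ L)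
    (horth : ∀ i j, i ≠ j → v i ⬝ᵥ v j = 0)
    (hnorm : ∀ i, v i ⬝ᵥ v i = p)
    (C : Set (Fin n → ZMod p))
    (hC : ∀ c : Fin n → ZMod p, c ∈ C ↔ ∃ a : Fin n → ℤ,
      (∀ i, c i = (a i : ZMod p)) ∧ (∑ i, ((a i : ℝ) / p) • v i) ∈ L) :
    ∀ c : Fin n → ZMod p, c ∈ C ↔ ∀ c' ∈ C, ∑ i, c i * c' i = 0 := by
  haveI : Fact p.Prime := ⟨hp⟩
  have hp0 : (p : ℝ) ≠ 0 := Nat.cast_ne_zero.mpr hp.ne_zero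
  have sum_dot : ∀ (f : Fin n → Fin n → ℝ) (w : Fin n → ℝ),
      (∑ i, f i) ⬝ᵥ w = ∑ i, f i ⬝ᵥ w := by
    intro f w
    simp only [dotProduct, Finset.sum_apply, Finset.sum_mul]
    exact Finset.sum_comm
  -- dot product of two frame combinations
  have hdot : ∀ a b : Fin n → ℤ,
      (∑ i, ((a i : ℝ) / p) • v i) ⬝ᵥ (∑ i, ((b i : ℝ) / p) • v i)
        = ((∑ i, a i * b i : ℤ) : ℝ) / p := by
    intro a b
    rw [sum_dot]
    push_cast
    rw [Finset.sum_div]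
    refine Finset.sum_congr rfl fun i _ => ?_
    rw [smul_dotProduct, dotProduct_comm, sum_dot]
    rw [Finset.sum_eq_single i (fun j _ hj => by
      rw [smul_dotProduct, horth j i hj, smul_zero])
      (fun h => absurd (Finset.mem_univ i) h)]
    rw [smul_dotProduct, hnorm i, smul_eq_mul, smul_eq_mul]
    field_simp
  -- divisibility from membership in L
  have key : ∀ a b : Fin n → ℤ,
      (∑ i, ((a i : ℝ) / p) • v i) ∈ L → (∑ i, ((b i : ℝ) / p) • v i) ∈ L →
      (p : ℤ) ∣ ∑ i, a i * b i := by
    intro a b ha hb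
    obtain ⟨k, hk⟩ := (hunimod _).mp ha _ hb
    rw [hdot, div_eq_iff hp0] at hk
    exact ⟨k, by rw [mul_comm]; exact_mod_cast hk⟩
  -- linear independence of the frame
  have hdotv : ∀ (g : Fin n → ℝ) (j : Fin n), (∑ i, g i • v i) ⬝ᵥ v j = g j * p := by
    intro g j
    rw [sum_dot, Finset.sum_eq_single j (fun i _ hi => by
        rw [smul_dotProduct, horth i j hi, smul_zero])
      (fun h => absurd (Finset.mem_univ j) h),
      smul_dotProduct, hnorm j, smul_eq_mul]
  have hli : LinearIndependent ℝ v := by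
    rw [Fintype.linearIndependent_iff]
    intro g hg j
    have h0 : (∑ i, g i • v i) ⬝ᵥ v j = 0 := by rw [hg, zero_dotProduct]
    rw [hdotv] at h0
    exact (mul_eq_zero.mp h0).resolve_right hp0
  have hspan : Submodule.span ℝ (Set.range v) = ⊤ :=
    hli.span_eq_top_of_card_eq_finrank' (by simp)
  -- every element of L is a (k/p)-combination of the frame
  have hrep : ∀ ℓ ∈ L, ∃ k : Fin n → ℤ, ℓ = ∑ i, ((k i : ℝ) / p) • v i := by
    intro ℓ hℓ
    choose k hk using fun i => (hunimod ℓ).mp hℓ (v i) (hvL i)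
    refine ⟨k, ?_⟩
    have hmem : ℓ ∈ Submodule.span ℝ (Set.range v) := by
      rw [hspan]; trivial
    obtain ⟨r, hr⟩ := (Finsupp.mem_span_range_iff_exists_finsupp).mp hmem
    have hr' : ∑ i, r i • v i = ℓ := by
      rw [← hr, Finsupp.sum_fintype]
      intro i; exact zero_smul ℝ (v i)
    have hcoef : ∀ j, r j = (k j : ℝ) / p := by
      intro j
      have h1 : (∑ i, r i • v i) ⬝ᵥ v j = r j * p := hdotv r j
      rw [hr', hk j] at h1
      field_simp
      linarith [h1]
    rw [← hr']
    exact Finset.sum_congr rfl fun i _ => by rw [hcoef]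
  intro c
  constructor
  · -- forward: c ∈ C → orthogonal to all of C
    intro hc c' hc'
    obtain ⟨a, ha1, ha2⟩ := (hC c).mp hc
    obtain ⟨b, hb1, hb2⟩ := (hC c').mp hc'
    have hdvd := key a b ha2 hb2
    calc ∑ i, c i * c' i = ((∑ i, a i * b i : ℤ) : ZMod p) := by
          push_cast
          exact Finset.sum_congr rfl fun i _ => by rw [ha1, hb1]
      _ = 0 := (ZMod.intCast_zmod_eq_zero_iff_dvd _ _).mpr hdvd
  · -- backward
    intro H
    set a : Fin n → ℤ := fun i => ((c i).val : ℤ) with ha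
    have hlift : ∀ i, (a i : ZMod p) = c i := by
      intro i
      simp [ha, ZMod.natCast_val, ZMod.cast_id]
    refine (hC c).mpr ⟨a, fun i => (hlift i).symm, ?_⟩
    rw [hunimod]
    intro ℓ hℓ
    obtain ⟨k, hkℓ⟩ := hrep ℓ hℓ
    have hc' : (fun i => ((k i : ZMod p))) ∈ C :=
      (hC _).mpr ⟨k, fun i => rfl, by rw [← hkℓ]; exact hℓ⟩
    have h0 := H _ hc'
    have hdvd : (p : ℤ) ∣ ∑ i, a i * k i := by
      rw [← ZMod.intCast_zmod_eq_zero_iff_dvd]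
      push_cast
      rw [← h0]
      exact Finset.sum_congr rfl fun i _ => by rw [hlift i]
    obtain ⟨m, hm⟩ := hdvd
    refine ⟨m, ?_⟩
    rw [hkℓ, hdot a k, hm]
    push_cast
    field_simp
end

section
/- For the code-to-lattice construction L(C) from a self-dual code C ≤ 𝔽_p^n and a p-frame, the lattice L(C) is even if and only if p = 2 and C is doubly-even (all codewords have weight divisible by 4). -/
open Matrix Finset

lemma stmt13_sum_dotProduct {n : ℕ} {ι : Type*} (s : Finset ι)
    (f : ι → (Fin n → ℝ)) (x : Fin n → ℝ) :
    (∑ i ∈ s, f i) ⬝ᵥ x = ∑ i ∈ s, f i ⬝ᵥ x := by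
  simp only [dotProduct, Finset.sum_apply, Finset.sum_mul]
  exact Finset.sum_comm

lemma stmt13_dotProduct_sum {n : ℕ} {ι : Type*} (s : Finset ι)
    (x : Fin n → ℝ) (f : ι → (Fin n → ℝ)) :
    x ⬝ᵥ (∑ i ∈ s, f i) = ∑ i ∈ s, x ⬝ᵥ f i := by
  simp only [dotProduct, Finset.sum_apply, Finset.mul_sum]
  exact Finset.sum_comm

lemma stmt13_dot_calc {n : ℕ} (q : ℝ) (hq : q ≠ 0)
    (v : Fin n → (Fin n → ℝ))
    (horth : ∀ i j, i ≠ j → v i ⬝ᵥ v j = 0)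
    (hnorm : ∀ i, v i ⬝ᵥ v i = q)
    (a : Fin n → ℤ) :
    (∑ i, ((a i : ℝ) / q) • v i) ⬝ᵥ (∑ i, ((a i : ℝ) / q) • v i)
      = (∑ i, (a i : ℝ) ^ 2) / q := by
  rw [stmt13_sum_dotProduct, Finset.sum_div]
  refine Finset.sum_congr rfl fun i _ => ?_
  rw [smul_dotProduct, stmt13_dotProduct_sum]
  simp_rw [dotProduct_smul, smul_eq_mul]
  rw [Finset.sum_eq_single i]
  · rw [hnorm i]; field_simp
  · intro j _ hj
    rw [horth i j (Ne.symm hj), mul_zero]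
  · simp

/-- For the code-to-lattice construction from a self-dual code `C ≤ 𝔽_pⁿ` and a
`p`-frame, the lattice `L(C)` is even iff `p = 2` and `C` is doubly even. -/
theorem stmt13 {n : ℕ} (hn : 0 < n) (p : ℕ) (hp : p.Prime)
    (v : Fin n → (Fin n → ℝ))
    (horth : ∀ i j, i ≠ j → v i ⬝ᵥ v j = 0)
    (hnorm : ∀ i, v i ⬝ᵥ v i = p)
    (C : Set (Fin n → ZMod p))
    (hC : ∀ c : Fin n → ZMod p, c ∈ C ↔ ∀ c' ∈ C, ∑ i, c i * c' i = 0) :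
    (∀ x ∈ {x : Fin n → ℝ | ∃ a : Fin n → ℤ,
        (fun i => ((a i : ZMod p))) ∈ C ∧ x = ∑ i, ((a i : ℝ) / p) • v i},
      ∃ k : ℤ, x ⬝ᵥ x = 2 * (k : ℝ)) ↔
    (p = 2 ∧ ∀ c ∈ C, 4 ∣ (Finset.univ.filter (fun i => c i ≠ 0)).card) := by
  have hppos : 0 < p := hp.pos
  have hp0 : (p : ℝ) ≠ 0 := by positivity
  constructor
  · intro h
    have h0C : (0 : Fin n → ZMod p) ∈ C := (hC 0).mpr (fun c' _ => by simp)
    have hp2 : p = 2 := by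
      set i0 : Fin n := ⟨0, hn⟩
      set a : Fin n → ℤ := fun i => if i = i0 then (p : ℤ) else 0 with ha
      have hmem : (fun i => ((a i : ZMod p))) ∈ C := by
        have : (fun i => ((a i : ZMod p))) = (0 : Fin n → ZMod p) := by
          funext i
          simp only [ha]
          split <;> simp
        rw [this]; exact h0C
      obtain ⟨k, hk⟩ := h (∑ i, ((a i : ℝ) / p) • v i) ⟨a, hmem, rfl⟩
      rw [stmt13_dot_calc (p : ℝ) hp0 v horth hnorm a] at hk
      have hsum : ∑ i, (a i : ℝ) ^ 2 = (p : ℝ) ^ 2 := by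
        have hterm : ∀ i, ((a i : ℝ)) ^ 2 = if i = i0 then (p : ℝ) ^ 2 else 0 := by
          intro i; by_cases hi : i = i0 <;> simp [ha, hi]
        simp_rw [hterm]
        simp
      rw [hsum] at hk
      have hpp : ((p : ℝ)) ^ 2 / p = p := by field_simp [sq]
      rw [hpp] at hk
      have hpk : (p : ℤ) = 2 * k := by exact_mod_cast hk
      have heven : Even p := by
        have : (2 : ℤ) ∣ (p : ℤ) := ⟨k, hpk⟩
        have h2 : 2 ∣ p := by exact_mod_cast this
        exact even_iff_two_dvd.mpr h2
      exact (Nat.Prime.even_iff hp).mp heven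
    subst hp2
    refine ⟨rfl, fun c hcC => ?_⟩
    set a : Fin n → ℤ := fun i => ((c i).val : ℤ) with ha
    have hmem : (fun i => ((a i : ZMod 2))) ∈ C := by
      have : (fun i => ((a i : ZMod 2))) = c := by
        funext i
        exact (by decide : ∀ x : ZMod 2, ((x.val : ℤ) : ZMod 2) = x) (c i)
      rw [this]; exact hcC
    obtain ⟨k, hk⟩ := h (∑ i, ((a i : ℝ) / ((2 : ℕ) : ℝ)) • v i) ⟨a, hmem, rfl⟩
    rw [stmt13_dot_calc ((2 : ℕ) : ℝ) hp0 v horth hnorm a] at hk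
    have hsum : ∑ i, (a i : ℝ) ^ 2
        = ((Finset.univ.filter (fun i => c i ≠ 0)).card : ℝ) := by
      rw [Finset.card_filter]
      push_cast
      refine Finset.sum_congr rfl fun i _ => ?_
      have hv : (c i).val = if c i ≠ 0 then 1 else 0 :=
        (by decide : ∀ x : ZMod 2, x.val = if x ≠ 0 then 1 else 0) (c i)
      simp only [ha, hv]
      split <;> norm_num
    rw [hsum] at hk
    have hcard : ((Finset.univ.filter (fun i => c i ≠ 0)).card : ℤ) = 4 * k := by
      have h2 : ((2 : ℕ) : ℝ) = 2 := by norm_num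
      rw [h2] at hk
      have : ((Finset.univ.filter (fun i => c i ≠ 0)).card : ℝ) = 4 * k := by
        field_simp at hk; linarith
      exact_mod_cast this
    have : (4 : ℤ) ∣ ((Finset.univ.filter (fun i => c i ≠ 0)).card : ℤ) := ⟨k, hcard⟩
    exact_mod_cast this
  · rintro ⟨hp2, hde⟩
    subst hp2
    rintro x ⟨a, haC, rfl⟩
    rw [stmt13_dot_calc ((2 : ℕ) : ℝ) hp0 v horth hnorm a]
    have h1 : ∀ i ∈ Finset.univ, (4 : ℤ) ∣ (a i ^ 2 - a i % 2) := by
      intro i _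
      rcases Int.even_or_odd (a i) with ⟨m, hm⟩ | ⟨m, hm⟩
      · refine ⟨m * m, ?_⟩
        have h2 : a i % 2 = 0 := by omega
        rw [h2, hm]; ring
      · refine ⟨m * m + m, ?_⟩
        have h2 : a i % 2 = 1 := by omega
        rw [h2, hm]; ring
    have h2 : (4 : ℤ) ∣ ∑ i, a i % 2 := by
      have heq : ∑ i, a i % 2
          = ((Finset.univ.filter (fun i => (a i : ZMod 2) ≠ 0)).card : ℤ) := by
        rw [Finset.card_filter]
        push_cast
        refine Finset.sum_congr rfl fun i _ => ?_
        have hzd := ZMod.intCast_zmod_eq_zero_iff_dvd (a i) 2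
        split_ifs with hne
        · have : ¬ (2 : ℤ) ∣ a i := fun hd => hne (hzd.mpr hd)
          omega
        · have : (2 : ℤ) ∣ a i := hzd.mp (not_not.mp hne)
          omega
      rw [heq]
      exact_mod_cast hde _ haC
    have hd4 : (4 : ℤ) ∣ ∑ i, a i ^ 2 := by
      have hs := Finset.dvd_sum h1
      rw [Finset.sum_sub_distrib] at hs
      omega
    obtain ⟨m, hm⟩ := hd4
    refine ⟨m, ?_⟩
    have hcast : (∑ i, (a i : ℝ) ^ 2) = ((4 * m : ℤ) : ℝ) := by
      rw [← hm]; push_cast; ring_nf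
    rw [hcast]; push_cast; ring
end
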